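/- arXiv:2405.15731 — 4 statements merged into one kernel-verified Lean document; each statement's English description precedes it below -/
import Mathlib

section
/- Let q_0,…,q_L, k_0,…,k_L ∈ ℝ^m, let φ, ψ : ℝ^m → ℝ^n, let W_V ∈ ℝ^{d×d}, and let η_0,…,η_L be nonzero real numbers. Define the separable attention output y_i = Σ_{j=0}^{i} (φ(q_i)ᵀ ψ(k_j) / η_i) W_V u_j for an input sequence u_0,…,u_L ∈ ℝ^d. Then this output equals, at every time step i, the output of the LTV system of state dimension N = nd with Λ_0 = I_{nd}, Λ_i = (η_{i-1}/η_i) I_{nd} for i ≥ 1, B_i = (1/η_i)(I_d ⊗ ψ(k_i)) W_V ∈ ℝ^{nd×d}, C_i = I_d ⊗ φ(q_i)ᵀ ∈ ℝ^{d×nd}, and D_i = 0, where ⊗ denotes the Kronecker product. -/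
open Matrix

/-- Hidden state of an LTV system: `h_{-1} = 0`, `h_i = Λ_i h_{i-1} + B_i u_i`. -/
def ltvState {S U : Type} [Fintype S] [Fintype U]
    (Λ : ℕ → Matrix S S ℝ) (B : ℕ → Matrix S U ℝ) (u : ℕ → U → ℝ) : ℕ → S → ℝ
  | 0 => Λ 0 *ᵥ (0 : S → ℝ) + B 0 *ᵥ u 0
  | i + 1 => Λ (i + 1) *ᵥ ltvState Λ B u i + B (i + 1) *ᵥ u (i + 1)

/-- Output of an LTV system: `y_i = C_i h_i + D_i u_i`. -/
def ltvOutput {S U Y : Type} [Fintype S] [Fintype U]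
    (Λ : ℕ → Matrix S S ℝ) (B : ℕ → Matrix S U ℝ) (C : ℕ → Matrix Y S ℝ)
    (D : ℕ → Matrix Y U ℝ) (u : ℕ → U → ℝ) (i : ℕ) : Y → ℝ :=
  C i *ᵥ ltvState Λ B u i + D i *ᵥ u i

/-- Separable attention
`y_i = Σ_{j=0}^{i} (φ(q_i)ᵀψ(k_j)/η_i) W_V u_j` equals, at every time step, the output of
the LTV system of state dimension `N = n·d` (state index `Fin d × Fin n`) with
`Λ_0 = I_{nd}`, `Λ_i = (η_{i-1}/η_i) I_{nd}` for `i ≥ 1`,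
`B_i = (1/η_i)(I_d ⊗ ψ(k_i)) W_V` (entrywise `((a,b), j) ↦ (1/η_i) ψ(k_i)_b (W_V)_{a j}`),
`C_i = I_d ⊗ φ(q_i)ᵀ` (entrywise `(j, (a,b)) ↦ if j = a then φ(q_i)_b else 0`), `D_i = 0`. -/
theorem separable_attention_as_ltv (m n d : ℕ)
    (q k : ℕ → Fin m → ℝ) (φ ψ : (Fin m → ℝ) → Fin n → ℝ)
    (WV : Matrix (Fin d) (Fin d) ℝ)
    (η : ℕ → ℝ) (hη : ∀ i, η i ≠ 0)
    (u : ℕ → Fin d → ℝ) (i : ℕ) :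
    (∑ j ∈ Finset.range (i + 1), (φ (q i) ⬝ᵥ ψ (k j) / η i) • (WV *ᵥ u j)) =
    ltvOutput
      (fun t => if t = 0 then (1 : Matrix (Fin d × Fin n) (Fin d × Fin n) ℝ)
        else (η (t - 1) / η t) • (1 : Matrix (Fin d × Fin n) (Fin d × Fin n) ℝ))
      (fun t => Matrix.of fun (p : Fin d × Fin n) (j : Fin d) =>
        (1 / η t) * (ψ (k t) p.2 * WV p.1 j))
      (fun t => Matrix.of fun (j : Fin d) (p : Fin d × Fin n) =>
        if j = p.1 then φ (q t) p.2 else 0)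
      (fun _ => (0 : Matrix (Fin d) (Fin d) ℝ)) u i := by
  set Λ : ℕ → Matrix (Fin d × Fin n) (Fin d × Fin n) ℝ :=
    (fun t => if t = 0 then (1 : Matrix (Fin d × Fin n) (Fin d × Fin n) ℝ)
      else (η (t - 1) / η t) • (1 : Matrix (Fin d × Fin n) (Fin d × Fin n) ℝ)) with hΛ
  set B : ℕ → Matrix (Fin d × Fin n) (Fin d) ℝ :=
    (fun t => Matrix.of fun (p : Fin d × Fin n) (j : Fin d) =>
      (1 / η t) * (ψ (k t) p.2 * WV p.1 j)) with hB
  have hstate : ∀ t (p : Fin d × Fin n), ltvState Λ B u t p =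
      (1 / η t) * ∑ j ∈ Finset.range (t + 1), ψ (k j) p.2 * (WV *ᵥ u j) p.1 := by
    intro t
    induction t with
    | zero =>
      intro p
      simp [ltvState, hΛ, hB, Pi.add_apply, mulVec, dotProduct, Finset.mul_sum, mul_assoc]
    | succ t ih =>
      intro p
      have h1 : (Λ (t + 1) *ᵥ ltvState Λ B u t) p
          = (η t / η (t + 1)) * ltvState Λ B u t p := by
        simp [hΛ, smul_mulVec]
      have h2 : (B (t + 1) *ᵥ u (t + 1)) p
          = (1 / η (t + 1)) * (ψ (k (t + 1)) p.2 * (WV *ᵥ u (t + 1)) p.1) := by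
        simp [hB, mulVec, dotProduct, Finset.mul_sum, mul_assoc]
      show (Λ (t + 1) *ᵥ ltvState Λ B u t) p + (B (t + 1) *ᵥ u (t + 1)) p = _
      rw [h1, h2, ih, Finset.sum_range_succ (n := t + 1)]
      have hc : η t / η (t + 1) * (1 / η t *
          ∑ j ∈ Finset.range (t + 1), ψ (k j) p.2 * (WV *ᵥ u j) p.1)
          = 1 / η (t + 1) * ∑ j ∈ Finset.range (t + 1), ψ (k j) p.2 * (WV *ᵥ u j) p.1 := by
        field_simp
        rw [mul_div_mul_left _ _ (hη t)]
      rw [hc, mul_add]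
  funext a
  show _ = (_ *ᵥ ltvState Λ B u i) a + ((0 : Matrix (Fin d) (Fin d) ℝ) *ᵥ u i) a
  rw [zero_mulVec]
  have hC : ((Matrix.of fun (j : Fin d) (p : Fin d × Fin n) =>
      if j = p.1 then φ (q i) p.2 else 0) *ᵥ ltvState Λ B u i) a
      = ∑ b : Fin n, φ (q i) b * ltvState Λ B u i (a, b) := by
    simp only [mulVec, dotProduct, Matrix.of_apply, Fintype.sum_prod_type]
    rw [Finset.sum_eq_single a]
    · simp
    · intro c _ hc
      simp [Ne.symm hc]
    · simp
  simp only [hC, hstate, Finset.mul_sum, Finset.sum_apply, Pi.smul_apply, smul_eq_mul, Pi.add_apply, Pi.zero_apply, add_zero]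
  rw [Finset.sum_comm]
  refine Finset.sum_congr rfl fun j _ => ?_
  simp only [dotProduct, div_eq_mul_inv, Finset.sum_mul, one_mul]
  exact Finset.sum_congr rfl fun b _ => by ring
end

section
/- For m ≥ 1 and any x ∈ ℝ^m, the family of squared feature values (Φ(x)_{(p,f)}²)_{(p,f) ∈ I} is summable and Σ_{(p,f) ∈ I} Φ(x)_{(p,f)}² = e^{‖x‖²}, where ‖x‖² = Σ_{l=1}^{m} x_l². In particular the infinite-dimensional feature vector Φ(x) is square-summable for every x. -/
/-- The index set `I = {(p, f) : p ∈ ℕ, f : Fin p → Fin m}` of the infinite-dimensional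
softmax feature map. -/
def FeatIdx (m : ℕ) : Type := Σ p : ℕ, Fin p → Fin m

/-- The feature map `Φ(x)_{(p,f)} = (p!)^{-1/2} ∏_{j<p} x_{f j}`. -/
noncomputable def featMap (m : ℕ) (x : Fin m → ℝ) (i : FeatIdx m) : ℝ :=
  ((i.1.factorial : ℝ) ^ (-(1 / 2 : ℝ))) * ∏ j : Fin i.1, x (i.2 j)

lemma featMap_sq (m : ℕ) (x : Fin m → ℝ) (i : Σ p : ℕ, Fin p → Fin m) :
    (featMap m x i) ^ 2 = (∏ j : Fin i.1, (x (i.2 j)) ^ 2) / (i.1.factorial : ℝ) := by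
  have hfac : (0:ℝ) ≤ (i.1.factorial : ℝ) := Nat.cast_nonneg _
  unfold featMap; rw [mul_pow, ← Finset.prod_pow]
  rw [← Real.rpow_natCast ((i.1.factorial : ℝ) ^ (-(1 / 2 : ℝ))) 2,
    ← Real.rpow_mul hfac]
  norm_num
  rw [Real.rpow_neg_one, div_eq_inv_mul]

lemma fiber_sum (m : ℕ) (x : Fin m → ℝ) (p : ℕ) :
    ∑ f : Fin p → Fin m, ∏ j : Fin p, (x (f j)) ^ 2 = (∑ l : Fin m, (x l) ^ 2) ^ p := by
  rw [← Fintype.prod_sum (fun (_ : Fin p) (l : Fin m) => (x l) ^ 2)]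
  simp

/-- For `m ≥ 1` and any `x ∈ ℝ^m`, the squared feature values are
summable and sum to `e^{‖x‖²}`; in particular `Φ(x)` is square-summable. -/
theorem featMap_sq_summable (m : ℕ) (hm : 1 ≤ m) (x : Fin m → ℝ) :
    Summable (fun i : FeatIdx m => (featMap m x i) ^ 2) ∧
    ∑' i : FeatIdx m, (featMap m x i) ^ 2 = Real.exp (∑ l : Fin m, (x l) ^ 2) := by
  set t := ∑ l : Fin m, (x l) ^ 2 with ht
  have key : ∀ p : ℕ, ∑ f : Fin p → Fin m, (featMap m x ⟨p, f⟩) ^ 2 = t ^ p / p.factorial := by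
    intro p
    have : ∀ f : Fin p → Fin m, (featMap m x ⟨p, f⟩) ^ 2
        = (∏ j : Fin p, (x (f j)) ^ 2) / (p.factorial : ℝ) := fun f => featMap_sq m x ⟨p, f⟩
    rw [Finset.sum_congr rfl (fun f _ => this f), ← Finset.sum_div, fiber_sum]
  have hsum : Summable (fun i : (Σ p : ℕ, Fin p → Fin m) => (featMap m x i) ^ 2) := by
    apply (summable_sigma_of_nonneg (fun i => sq_nonneg _)).2
    constructor
    · intro p; exact Summable.of_finite
    · apply Summable.congr (Real.summable_pow_div_factorial t)
      intro p
      rw [tsum_fintype, key p]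
  refine ⟨hsum, ?_⟩
  show (∑' i : (Σ p : ℕ, Fin p → Fin m), (featMap m x i) ^ 2) = Real.exp t
  rw [Summable.tsum_sigma hsum]
  have : (fun p : ℕ => ∑' f : Fin p → Fin m, (featMap m x ⟨p, f⟩) ^ 2)
      = fun p => t ^ p / p.factorial := by
    funext p; rw [tsum_fintype, key p]
  rw [show (∑' (p : ℕ) (f : Fin p → Fin m), (featMap m x ⟨p, f⟩) ^ 2)
      = ∑' p : ℕ, t ^ p / p.factorial from by rw [tsum_congr fun p => by rw [tsum_fintype, key p]]]
  rw [Real.exp_eq_exp_ℝ, NormedSpace.exp_eq_tsum_div]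
end

section
/- For every n ∈ ℕ there do not exist functions φ, ψ : ℝ → ℝ^n such that e^{qk} = φ(q)ᵀψ(k) for all q, k ∈ ℝ. That is, the exponential kernel of softmax attention admits no exact finite-dimensional separable (feature-map) representation, so its Dynamical Systems Framework representation requires an infinite-dimensional hidden state. -/
open Matrix

/-- The exponential kernel `(q, k) ↦ e^{qk}` of softmax attention admits
no exact finite-dimensional separable (feature-map) representation: for every `n ∈ ℕ`
there are no `φ, ψ : ℝ → ℝ^n` with `e^{qk} = φ(q)ᵀψ(k)` for all `q, k ∈ ℝ`. Hence its
Dynamical Systems Framework representation requires an infinite-dimensional hidden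
state. -/
theorem softmax_kernel_not_finite_rank (n : ℕ) :
    ¬ ∃ φ ψ : ℝ → Fin n → ℝ, ∀ q k : ℝ, Real.exp (q * k) = φ q ⬝ᵥ ψ k := by
  rintro ⟨φ, ψ, h⟩
  set v : Fin (n + 1) → ℝ := fun i => Real.exp i with hv
  have hvinj : Function.Injective v := by
    intro i j hij
    have : (i : ℝ) = j := Real.exp_injective hij
    exact_mod_cast Fin.val_injective (by exact_mod_cast this)
  set M : Matrix (Fin (n + 1)) (Fin (n + 1)) ℝ := Matrix.vandermonde v with hM
  have hdet : M.det ≠ 0 := by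
    rw [hM, Matrix.det_vandermonde_ne_zero_iff]
    exact hvinj
  set A : Matrix (Fin (n + 1)) (Fin n) ℝ := fun i l => φ i l with hA
  set B : Matrix (Fin n) (Fin (n + 1)) ℝ := fun l j => ψ j l with hB
  have hMAB : M = A * B := by
    ext i j
    rw [hM, Matrix.mul_apply]
    simp only [Matrix.vandermonde_apply, hA, hB]
    have := h i j
    rw [mul_comm] at this
    rw [hv]
    rw [← Real.exp_nat_mul]
    exact this
  have hrank : M.rank = n + 1 := by
    have : IsUnit M := (Matrix.isUnit_iff_isUnit_det M).2 (isUnit_iff_ne_zero.2 hdet)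
    simpa using Matrix.rank_of_isUnit M this
  have hle : M.rank ≤ n := by
    rw [hMAB]
    calc (A * B).rank ≤ A.rank := Matrix.rank_mul_le_left A B
      _ ≤ n := by simpa using Matrix.rank_le_card_width A
  omega
end

section
/- Let s divide d, and for each head h = 1,…,s let q_i^h, k_i^h ∈ ℝ^{m}, feature maps φ^h, ψ^h : ℝ^{m} → ℝ^{n}, nonzero normalizations η_i^h ∈ ℝ, and value matrices W_V^h ∈ ℝ^{(d/s)×d} be given. For an input sequence u_0,…,u_L ∈ ℝ^d, define the multi-headed separable attention output y_i ∈ ℝ^d by stacking the head outputs y_i^h = Σ_{j=0}^{i} (φ^h(q_i^h)ᵀ ψ^h(k_j^h) / η_i^h) W_V^h u_j ∈ ℝ^{d/s}. Then y equals, at every time step, the output of the LTV system of state dimension N = nd with block-diagonal matrices Λ_0 = I_{nd}, Λ_i = blockdiag_h((η_{i-1}^h/η_i^h) I_{nd/s}) for i ≥ 1, B_i whose h-th block row is (1/η_i^h)(I_{d/s} ⊗ ψ^h(k_i^h)) W_V^h, C_i = blockdiag_h(I_{d/s} ⊗ φ^h(q_i^h)ᵀ), and D_i = 0. -/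
open Matrix

lemma mha_state_formula (s e m n : ℕ)
    (k : ℕ → Fin s → Fin m → ℝ)
    (ψ : Fin s → (Fin m → ℝ) → Fin n → ℝ)
    (η : ℕ → Fin s → ℝ) (hη : ∀ i h, η i h ≠ 0)
    (WV : Fin s → Matrix (Fin e) (Fin s × Fin e) ℝ)
    (u : ℕ → Fin s × Fin e → ℝ) (i : ℕ) (pp : (Fin s × Fin e) × Fin n) :
    ltvState
      (fun t => if t = 0 then (1 : Matrix ((Fin s × Fin e) × Fin n) ((Fin s × Fin e) × Fin n) ℝ)
        else Matrix.of fun pp qq : (Fin s × Fin e) × Fin n =>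
          if pp = qq then η (t - 1) pp.1.1 / η t pp.1.1 else 0)
      (fun t => Matrix.of fun (pp : (Fin s × Fin e) × Fin n) (j : Fin s × Fin e) =>
        (1 / η t pp.1.1) * (ψ pp.1.1 (k t pp.1.1) pp.2 * WV pp.1.1 pp.1.2 j))
      u i pp
    = (∑ j ∈ Finset.range (i + 1),
        ψ pp.1.1 (k j pp.1.1) pp.2 * (WV pp.1.1 *ᵥ u j) pp.1.2) / η i pp.1.1 := by
  induction i with
  | zero =>
    simp only [ltvState, if_pos rfl, Matrix.mulVec_zero, zero_add, Matrix.mulVec,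
      Matrix.of_apply, dotProduct, Finset.range_one, Finset.sum_singleton, zero_add]
    rw [Finset.mul_sum, Finset.sum_div]
    refine Finset.sum_congr rfl fun c _ => ?_
    field_simp
  | succ i ih =>
    simp only [ltvState, Pi.add_apply]
    have h1 : (i + 1 : ℕ) ≠ 0 := Nat.succ_ne_zero i
    rw [if_neg h1]
    have hΛ : ((Matrix.of fun pp qq : (Fin s × Fin e) × Fin n =>
        if pp = qq then η (i + 1 - 1) pp.1.1 / η (i + 1) pp.1.1 else 0) *ᵥ
        ltvState
          (fun t => if t = 0 then (1 : Matrix ((Fin s × Fin e) × Fin n) ((Fin s × Fin e) × Fin n) ℝ)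
            else Matrix.of fun pp qq : (Fin s × Fin e) × Fin n =>
              if pp = qq then η (t - 1) pp.1.1 / η t pp.1.1 else 0)
          (fun t => Matrix.of fun (pp : (Fin s × Fin e) × Fin n) (j : Fin s × Fin e) =>
            (1 / η t pp.1.1) * (ψ pp.1.1 (k t pp.1.1) pp.2 * WV pp.1.1 pp.1.2 j))
          u i) pp
        = (η i pp.1.1 / η (i + 1) pp.1.1) * ltvState
          (fun t => if t = 0 then (1 : Matrix ((Fin s × Fin e) × Fin n) ((Fin s × Fin e) × Fin n) ℝ)
            else Matrix.of fun pp qq : (Fin s × Fin e) × Fin n =>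
              if pp = qq then η (t - 1) pp.1.1 / η t pp.1.1 else 0)
          (fun t => Matrix.of fun (pp : (Fin s × Fin e) × Fin n) (j : Fin s × Fin e) =>
            (1 / η t pp.1.1) * (ψ pp.1.1 (k t pp.1.1) pp.2 * WV pp.1.1 pp.1.2 j))
          u i pp := by
      simp only [Matrix.mulVec, Matrix.of_apply, dotProduct, ite_mul, zero_mul]
      rw [Finset.sum_ite_eq]
      simp
    rw [hΛ, ih]
    have hB : ((Matrix.of fun (pp : (Fin s × Fin e) × Fin n) (j : Fin s × Fin e) =>
        (1 / η (i + 1) pp.1.1) * (ψ pp.1.1 (k (i + 1) pp.1.1) pp.2 * WV pp.1.1 pp.1.2 j)) *ᵥ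
        u (i + 1)) pp
        = (1 / η (i + 1) pp.1.1) * (ψ pp.1.1 (k (i + 1) pp.1.1) pp.2 *
            (WV pp.1.1 *ᵥ u (i + 1)) pp.1.2) := by
      simp only [Matrix.mulVec, Matrix.of_apply, dotProduct, Finset.mul_sum]
      refine Finset.sum_congr rfl fun c _ => ?_
      ring
    rw [hB]
    conv_rhs => rw [Finset.sum_range_succ, add_div]
    have h0 := hη i pp.1.1
    have h2 := hη (i + 1) pp.1.1
    congr 1
    · field_simp
    · rw [one_div, inv_mul_eq_div]

/-- Multi-headed separable attention with `s` heads of head dimension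
`e = d/s` (so `d = s·e`; the model dimension `ℝ^d` is indexed by `Fin s × Fin e`, stacking
the head outputs `y_i^h = Σ_{j=0}^{i} (φ^h(q_i^h)ᵀ ψ^h(k_j^h)/η_i^h) W_V^h u_j ∈ ℝ^{d/s}`)
equals, at every time step, the output of the LTV system of state dimension `N = n·d`
with block-diagonal matrices `Λ_0 = I_{nd}`,
`Λ_i = blockdiag_h((η_{i-1}^h/η_i^h) I_{nd/s})` for `i ≥ 1`, `B_i` whose `h`-th block row
is `(1/η_i^h)(I_{d/s} ⊗ ψ^h(k_i^h)) W_V^h`, `C_i = blockdiag_h(I_{d/s} ⊗ φ^h(q_i^h)ᵀ)`,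
and `D_i = 0`. -/
theorem multihead_separable_attention_as_ltv (s e d m n : ℕ) (hd : d = s * e)
    (q k : ℕ → Fin s → Fin m → ℝ)
    (φ ψ : Fin s → (Fin m → ℝ) → Fin n → ℝ)
    (η : ℕ → Fin s → ℝ) (hη : ∀ i h, η i h ≠ 0)
    (WV : Fin s → Matrix (Fin e) (Fin s × Fin e) ℝ)
    (u : ℕ → Fin s × Fin e → ℝ) (i : ℕ) :
    (fun p : Fin s × Fin e =>
      (∑ j ∈ Finset.range (i + 1),
        (φ p.1 (q i p.1) ⬝ᵥ ψ p.1 (k j p.1) / η i p.1) • (WV p.1 *ᵥ u j)) p.2) =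
    ltvOutput
      (fun t => if t = 0 then (1 : Matrix ((Fin s × Fin e) × Fin n) ((Fin s × Fin e) × Fin n) ℝ)
        else Matrix.of fun pp qq : (Fin s × Fin e) × Fin n =>
          if pp = qq then η (t - 1) pp.1.1 / η t pp.1.1 else 0)
      (fun t => Matrix.of fun (pp : (Fin s × Fin e) × Fin n) (j : Fin s × Fin e) =>
        (1 / η t pp.1.1) * (ψ pp.1.1 (k t pp.1.1) pp.2 * WV pp.1.1 pp.1.2 j))
      (fun t => Matrix.of fun (j : Fin s × Fin e) (pp : (Fin s × Fin e) × Fin n) =>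
        if j = pp.1 then φ j.1 (q t j.1) pp.2 else 0)
      (fun _ => (0 : Matrix (Fin s × Fin e) (Fin s × Fin e) ℝ)) u i := by
  funext p
  simp only [ltvOutput, Pi.add_apply, Matrix.zero_mulVec, Pi.zero_apply, add_zero]
  rw [Finset.sum_apply]
  have hC : ∀ v : (Fin s × Fin e) × Fin n → ℝ,
      ((Matrix.of fun (j : Fin s × Fin e) (pp : (Fin s × Fin e) × Fin n) =>
        if j = pp.1 then φ j.1 (q i j.1) pp.2 else 0) *ᵥ v) p
      = ∑ r : Fin n, φ p.1 (q i p.1) r * v (p, r) := by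
    intro v
    simp only [Matrix.mulVec, Matrix.of_apply, dotProduct]
    rw [Fintype.sum_prod_type]
    simp only [ite_mul, zero_mul]
    rw [Finset.sum_eq_single_of_mem p (Finset.mem_univ p) (fun b _ hb => by simp [Ne.symm hb])]
    simp
  rw [hC]
  have := fun r => mha_state_formula s e m n k ψ η hη WV u i (p, r)
  simp only [this]
  simp only [dotProduct, Pi.smul_apply, smul_eq_mul, Finset.sum_div, Finset.sum_mul,
    Finset.mul_sum]
  rw [Finset.sum_comm]
  refine Finset.sum_congr rfl fun r _ => ?_
  refine Finset.sum_congr rfl fun j _ => ?_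
  ring
end
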